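/- Let Γ be a pre-automatic structure over a finite alphabet A that is an automatic cross-section, with interpretation σ : A⁺ → S consistent with an assignment of generators ι : A → L. Then for e ∈ L, the element σ(e) is a two-sided identity of S if and only if (e, ι(a)) ∈ Lₐ for every a ∈ A and L_e = L₌. -/
import Mathlib


universe u v

/-- A pre-automatic structure over an alphabet `A`: a language `L` of nonempty words
(elements of the free semigroup `A⁺`), a relation `L₌ ⊆ L × L`, and for each letter
`a ∈ A` a relation `Lₐ ⊆ L × L`. -/
structure PreAutomaticStructure (A : Type u) where
  L : Set (FreeSemigroup A)
  Leq : Set (FreeSemigroup A × FreeSemigroup A)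
  Lletter : A → Set (FreeSemigroup A × FreeSemigroup A)
  Leq_sub : Leq ⊆ L ×ˢ L
  Lletter_sub : ∀ a, Lletter a ⊆ L ×ˢ L

/-- An interpretation of a pre-automatic structure with respect to a semigroup `S`:
a semigroup homomorphism `σ : A⁺ → S` such that (i) `σ(L) = S`, (ii) `L₌` captures
equality of representatives, (iii) `Lₐ` captures right multiplication by `a`. -/
structure IsInterpretation {A : Type u} {S : Type v} [Semigroup S]
    (Γ : PreAutomaticStructure A) (σ : FreeSemigroup A →ₙ* S) : Prop where
  surj : ⇑σ '' Γ.L = Set.univ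
  eq_iff : ∀ u ∈ Γ.L, ∀ v ∈ Γ.L, ((u, v) ∈ Γ.Leq ↔ σ u = σ v)
  step_iff : ∀ (a : A), ∀ u ∈ Γ.L, ∀ v ∈ Γ.L,
    ((u, v) ∈ Γ.Lletter a ↔ σ (u * FreeSemigroup.of a) = σ v)

/-- `σ` is consistent with the assignment of generators `ι : A → L`. -/
def ConsistentWith {A : Type u} {S : Type v} [Semigroup S] (Γ : PreAutomaticStructure A)
    (σ : FreeSemigroup A →ₙ* S) (ι : A → FreeSemigroup A) : Prop :=
  (∀ a, ι a ∈ Γ.L) ∧ ∀ a, σ (ι a) = σ (FreeSemigroup.of a)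

/-- `ι : A → L` is an assignment of generators: some interpretation is consistent with it. -/
def IsAssignment {A : Type u} (Γ : PreAutomaticStructure A)
    (ι : A → FreeSemigroup A) : Prop :=
  ∃ (T : Type v) (inst : Semigroup T)
    (τ : @MulHom (FreeSemigroup A) T _ inst.toMul),
    @IsInterpretation A T inst Γ τ ∧ @ConsistentWith A T inst Γ τ ι

/-- Composition of relations: `(u, v) ∈ R ∘ R'` iff `∃ x, (u, x) ∈ R ∧ (x, v) ∈ R'`. -/
def relComp {W : Type*} (R R' : Set (W × W)) : Set (W × W) :=
  {p | ∃ x, (p.1, x) ∈ R ∧ (x, p.2) ∈ R'}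

/-- The inverse of a relation. -/
def relInv {W : Type*} (R : Set (W × W)) : Set (W × W) := {p | (p.2, p.1) ∈ R}

/-- `L_w` for a word `w` given as a list of letters: `L_ε = L₌` and
`L_{a₁⋯aₙ} = L_{a₁} ∘ ⋯ ∘ L_{aₙ}`. -/
def PreAutomaticStructure.LwordList {A : Type u} (Γ : PreAutomaticStructure A) :
    List A → Set (FreeSemigroup A × FreeSemigroup A)
  | [] => Γ.Leq
  | [a] => Γ.Lletter a
  | a :: b :: rest => relComp (Γ.Lletter a) (Γ.LwordList (b :: rest))

/-- `L_w` for a nonempty word `w ∈ A⁺`. -/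
def PreAutomaticStructure.Lword {A : Type u} (Γ : PreAutomaticStructure A)
    (w : FreeSemigroup A) : Set (FreeSemigroup A × FreeSemigroup A) :=
  Γ.LwordList (w.head :: w.tail)

lemma lwordList_sub {A : Type u} (Γ : PreAutomaticStructure A) :
    ∀ (l : List A) (a : A), Γ.LwordList (a :: l) ⊆ Γ.L ×ˢ Γ.L
  | [], a => Γ.Lletter_sub a
  | b :: rest, a => by
    rintro ⟨u, v⟩ ⟨x, hx1, hx2⟩
    exact ⟨(Γ.Lletter_sub a hx1).1, (lwordList_sub Γ rest b hx2).2⟩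

lemma lwordList_iff {A : Type u} {S : Type v} [Semigroup S] (Γ : PreAutomaticStructure A)
    (σ : FreeSemigroup A →ₙ* S) (hσ : IsInterpretation Γ σ) :
    ∀ (l : List A) (a : A), ∀ u ∈ Γ.L, ∀ v ∈ Γ.L,
      ((u, v) ∈ Γ.LwordList (a :: l) ↔ σ (u * ⟨a, l⟩) = σ v)
  | [], a, u, hu, v, hv => hσ.step_iff a u hu v hv
  | b :: rest, a, u, hu, v, hv => by
    have key : (⟨a, b :: rest⟩ : FreeSemigroup A) = FreeSemigroup.of a * ⟨b, rest⟩ := rfl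
    constructor
    · rintro ⟨x, hx1, hx2⟩
      have hxL := (Γ.Lletter_sub a hx1).2
      have h1 := (hσ.step_iff a u hu x hxL).mp hx1
      have h2 := (lwordList_iff Γ σ hσ rest b x hxL v hv).mp hx2
      rw [key, ← mul_assoc, map_mul, h1, ← map_mul, h2]
    · intro h
      obtain ⟨x, hxL, hxσ⟩ : ∃ x ∈ Γ.L, σ x = σ (u * FreeSemigroup.of a) := by
        have h1 : σ (u * FreeSemigroup.of a) ∈ (⇑σ '' Γ.L) := by rw [hσ.surj]; trivial
        obtain ⟨x, hx, hxe⟩ := h1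
        exact ⟨x, hx, hxe⟩
      refine ⟨x, (hσ.step_iff a u hu x hxL).mpr hxσ.symm,
        (lwordList_iff Γ σ hσ rest b x hxL v hv).mpr ?_⟩
      rw [map_mul, hxσ, map_mul, mul_assoc, ← map_mul, ← map_mul, ← key]
      exact h

/-- For an automatic cross-section with assignment of generators `ι` and `e ∈ L`:
`σ(e)` is a two-sided identity iff `(e, ι(a)) ∈ Lₐ` for every `a ∈ A` and `L_e = L₌`. -/
theorem stmt_11 {A : Type*} [Finite A] {S : Type*} [Semigroup S]
    (Γ : PreAutomaticStructure A) (σ : FreeSemigroup A →ₙ* S)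
    (hσ : IsInterpretation Γ σ) (hcs : Set.BijOn (⇑σ) Γ.L Set.univ)
    (ι : A → FreeSemigroup A) (hι : ConsistentWith Γ σ ι)
    (e : FreeSemigroup A) (he : e ∈ Γ.L) :
    (∀ s : S, σ e * s = s ∧ s * σ e = s) ↔
      ((∀ a : A, (e, ι a) ∈ Γ.Lletter a) ∧ Γ.Lword e = Γ.Leq) := by
  obtain ⟨ea, el⟩ := e
  have hLw : Γ.Lword ⟨ea, el⟩ = Γ.LwordList (ea :: el) := rfl
  constructor
  · intro hid
    refine ⟨fun a => (hσ.step_iff a _ he (ι a) (hι.1 a)).mpr ?_, ?_⟩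
    · rw [map_mul, (hid (σ (FreeSemigroup.of a))).1, hι.2 a]
    · rw [hLw]
      ext ⟨u, v⟩
      constructor
      · intro h
        have hm := lwordList_sub Γ el ea h
        have h2 := (lwordList_iff Γ σ hσ el ea u hm.1 v hm.2).mp h
        rw [map_mul, (hid (σ u)).2] at h2
        exact (hσ.eq_iff u hm.1 v hm.2).mpr h2
      · intro h
        have hm := Γ.Leq_sub h
        have h2 := (hσ.eq_iff u hm.1 v hm.2).mp h
        exact (lwordList_iff Γ σ hσ el ea u hm.1 v hm.2).mpr
          (by rw [map_mul, (hid (σ u)).2, h2])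
  · rintro ⟨h1, h2⟩
    rw [hLw] at h2
    have hleft : ∀ x : FreeSemigroup A, σ ⟨ea, el⟩ * σ x = σ x := by
      intro x
      induction x using FreeSemigroup.recOnMul with
      | ih1 a =>
        have := (hσ.step_iff a _ he (ι a) (hι.1 a)).mp (h1 a)
        rw [map_mul, hι.2 a] at this
        exact this
      | ih2 x y hx hy => rw [map_mul, ← mul_assoc, hx]
    intro s
    obtain ⟨u, hu, rfl⟩ : ∃ u ∈ Γ.L, σ u = s := by
      have h3 : s ∈ (⇑σ '' Γ.L) := by rw [hσ.surj]; trivial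
      obtain ⟨u, hu, hue⟩ := h3
      exact ⟨u, hu, hue⟩
    refine ⟨hleft u, ?_⟩
    obtain ⟨v, hv, hvσ⟩ : ∃ v ∈ Γ.L, σ v = σ (u * ⟨ea, el⟩) := by
      have h3 : σ (u * ⟨ea, el⟩) ∈ (⇑σ '' Γ.L) := by rw [hσ.surj]; trivial
      obtain ⟨v, hvv, hve⟩ := h3
      exact ⟨v, hvv, hve⟩
    have hin : (u, v) ∈ Γ.LwordList (ea :: el) :=
      (lwordList_iff Γ σ hσ el ea u hu v hv).mpr hvσ.symm
    rw [h2] at hin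
    have := (hσ.eq_iff u hu v hv).mp hin
    rw [hvσ, map_mul] at this
    exact this.symm
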